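/- Let w₁(x) = |x|^{-n} and w₂(x) ≡ 1 on ℝⁿ. Then the pair (w₁, w₂) belongs to the bilinear Muckenhoupt class A_{(1,1)}, even though w₁ is not locally integrable on ℝⁿ (hence w₁ ∉ A₁). -/

import Mathlib

open MeasureTheory ENNReal

noncomputable section

/-- Points of `ℝⁿ`. -/
abbrev Xs (n : ℕ) := Fin n → ℝ

/-- The axis-parallel cube with "lower-left" corner `c` and side length `l`. -/
def Cube {n : ℕ} (c : Xs n) (l : ℝ) : Set (Xs n) := Set.Icc c (fun i => c i + l)

/-- Average `⨍_Q f dμ` of an `ℝ≥0∞`-valued function. -/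
def avg {n : ℕ} (μ : Measure (Xs n)) (Q : Set (Xs n)) (f : Xs n → ℝ≥0∞) : ℝ≥0∞ :=
  (μ Q)⁻¹ * ∫⁻ x in Q, f x ∂μ

/-- The Muckenhoupt `A_q(μ)` constant of a weight `v` (with the `A₁` convention
using the essential supremum when `q = 1`). -/
def AConst {n : ℕ} (μ : Measure (Xs n)) (v : Xs n → ℝ≥0∞) (q : ℝ) : ℝ≥0∞ :=
  ⨆ (c : Xs n) (l : ℝ) (_ : 0 < l),
    avg μ (Cube c l) v *
      (if q = 1 then essSup (fun x => (v x)⁻¹) (μ.restrict (Cube c l))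
       else (avg μ (Cube c l) (fun x => v x ^ (-(q - 1)⁻¹))) ^ (q - 1))

namespace Statement1Aux

variable {n : ℕ}

def rho (x : Xs n) : ℝ := Real.sqrt (∑ i, x i ^ 2)

lemma rho_def (x : Xs n) : Real.sqrt (∑ i, x i ^ 2) = rho x := rfl

lemma rho_nonneg (x : Xs n) : 0 ≤ rho x := Real.sqrt_nonneg _

lemma rho_eq_norm (x : Xs n) :
    rho x = ‖(show EuclideanSpace ℝ (Fin n) from (WithLp.equiv 2 (Fin n → ℝ)).symm x)‖ := by
  rw [EuclideanSpace.norm_eq]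
  simp [rho, Real.norm_eq_abs, sq_abs]

lemma rho_triangle (x y : Xs n) : rho x ≤ rho y + rho (x - y) := by
  rw [rho_eq_norm, rho_eq_norm, rho_eq_norm]
  have h : (WithLp.equiv 2 (Fin n → ℝ)).symm x =
      (WithLp.equiv 2 (Fin n → ℝ)).symm y + (WithLp.equiv 2 (Fin n → ℝ)).symm (x - y) := by
    ext i; simp
  rw [h]; exact norm_add_le _ _

lemma abs_le_rho (x : Xs n) (i : Fin n) : |x i| ≤ rho x := by
  rw [← Real.sqrt_sq_eq_abs]
  exact Real.sqrt_le_sqrt (Finset.single_le_sum (fun j _ => sq_nonneg (x j)) (Finset.mem_univ i))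

lemma norm_le_rho (x : Xs n) : ‖x‖ ≤ rho x :=
  (pi_norm_le_iff_of_nonneg (rho_nonneg x)).2 fun i => by
    rw [Real.norm_eq_abs]; exact abs_le_rho x i

lemma rho_le_of_abs_le {x : Xs n} {b : ℝ} (hb : 0 ≤ b) (h : ∀ i, |x i| ≤ b) :
    rho x ≤ Real.sqrt n * b := by
  have h1 : rho x ≤ Real.sqrt (∑ _i : Fin n, b ^ 2) := by
    apply Real.sqrt_le_sqrt
    exact Finset.sum_le_sum fun i _ => by
      rw [← sq_abs]; exact pow_le_pow_left₀ (abs_nonneg _) (h i) 2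
  have h2 : (∑ _i : Fin n, b ^ 2) = (n : ℝ) * b ^ 2 := by
    simp [Finset.sum_const, nsmul_eq_mul]
  rw [h2] at h1
  calc rho x ≤ Real.sqrt ((n : ℝ) * b ^ 2) := h1
    _ = Real.sqrt n * b := by
        rw [Real.sqrt_mul (by positivity) (b ^ 2), Real.sqrt_sq hb]

lemma volume_Icc_pi (a b : Xs n) : volume (Set.Icc a b) = ∏ i, ENNReal.ofReal (b i - a i) := by
  rw [← Set.pi_univ_Icc, volume_pi_pi]; simp [Real.volume_Icc]

lemma volume_cube (c : Xs n) (l : ℝ) : volume (Cube c l) = ENNReal.ofReal l ^ n := by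
  rw [Cube, volume_Icc_pi]; simp

lemma volume_cball {R : ℝ} (hR : 0 ≤ R) :
    volume (Metric.closedBall (0 : Xs n) R) = ENNReal.ofReal (2 * R) ^ n := by
  rw [closedBall_pi _ hR, volume_pi_pi]
  simp [Real.volume_closedBall]

lemma ofReal_rho_inv_eq {x : Xs n} (hx : 0 < rho x) :
    (ENNReal.ofReal (rho x ^ (-(n:ℝ))))⁻¹ = ENNReal.ofReal (rho x ^ (n:ℕ)) := by
  rw [Real.rpow_neg (rho_nonneg x), Real.rpow_natCast,
    ← ENNReal.ofReal_inv_of_pos (by positivity), inv_inv]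


lemma shell_real_eq {R : ℝ} (hR : 0 < R) (k : ℕ) :
    ((Real.sqrt (R * (4:ℝ)⁻¹ ^ (k+1)))⁻¹) ^ n * (2 * (R * (4:ℝ)⁻¹ ^ k)) ^ n
      = (4 * Real.sqrt R) ^ n * (((2:ℝ)⁻¹) ^ n) ^ k := by
  have h4 : ((4:ℝ)⁻¹) ^ (k+1) = (((2:ℝ)⁻¹) ^ (k+1)) ^ 2 := by
    rw [← pow_mul, mul_comm (k+1) 2, pow_mul]; norm_num
  have hs : Real.sqrt (R * (4:ℝ)⁻¹ ^ (k+1)) = Real.sqrt R * ((2:ℝ)⁻¹) ^ (k+1) := by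
    rw [Real.sqrt_mul hR.le, h4, Real.sqrt_sq (by positivity)]
  have hsR : Real.sqrt R * Real.sqrt R = R := Real.mul_self_sqrt hR.le
  have hsRpos : 0 < Real.sqrt R := Real.sqrt_pos.mpr hR
  rw [hs, ← mul_pow, ← pow_right_comm, ← mul_pow]
  congr 1
  have h4k : ((4:ℝ))^k = 2^k * 2^k := by
    rw [show (4:ℝ) = 2 * 2 by norm_num, mul_pow]
  rw [show (4:ℝ)⁻¹ ^ k = (2⁻¹)^k * (2⁻¹)^k by rw [← mul_pow]; norm_num, pow_succ]
  field_simp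
  rw [Real.sq_sqrt hR.le]
  ring

lemma tail_bound (hn : 0 < n) {R : ℝ} (hR : 0 < R) :
    ∫⁻ x in Metric.closedBall (0 : Xs n) R, ENNReal.ofReal (rho x ^ (-(n:ℝ) * 2⁻¹)) ≤
      ENNReal.ofReal ((4 * Real.sqrt R) ^ n) * (1 - ENNReal.ofReal (((2:ℝ)⁻¹) ^ n))⁻¹ := by
  haveI : Nonempty (Fin n) := Fin.pos_iff_nonempty.mp hn
  set F : Xs n → ℝ≥0∞ := fun x => ENNReal.ofReal (rho x ^ (-(n:ℝ) * 2⁻¹)) with hF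
  set S : ℕ → Set (Xs n) := fun k =>
    Metric.closedBall 0 (R * (4:ℝ)⁻¹ ^ k) \ Metric.closedBall 0 (R * (4:ℝ)⁻¹ ^ (k+1)) with hSdef
  have hcover : Metric.closedBall (0 : Xs n) R ⊆ (⋃ k, S k) ∪ {0} := by
    intro x hx
    rcases eq_or_ne x 0 with h0 | h0
    · exact Or.inr (by simp [h0])
    left
    have hxpos : 0 < ‖x‖ := norm_pos_iff.mpr h0
    have hxR : ‖x‖ ≤ R := by rwa [Metric.mem_closedBall, dist_zero_right] at hx
    have hex : ∃ k : ℕ, R * (4:ℝ)⁻¹ ^ (k+1) < ‖x‖ := by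
      obtain ⟨k, hk⟩ := exists_pow_lt_of_lt_one (div_pos hxpos hR) (by norm_num : (4:ℝ)⁻¹ < 1)
      refine ⟨k, ?_⟩
      have h1 : ((4:ℝ)⁻¹) ^ (k+1) ≤ ((4:ℝ)⁻¹) ^ k :=
        pow_le_pow_of_le_one (by norm_num) (by norm_num) (Nat.le_succ k)
      have h2 : ((4:ℝ)⁻¹) ^ k * R < ‖x‖ := (lt_div_iff₀ hR).mp hk
      nlinarith [mul_le_mul_of_nonneg_right h1 hR.le]
    refine Set.mem_iUnion.2 ⟨Nat.find hex, ?_, ?_⟩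
    · rw [Metric.mem_closedBall, dist_zero_right]
      rcases Nat.eq_zero_or_pos (Nat.find hex) with h | h
      · rw [h]; simpa using hxR
      · have hmin := Nat.find_min hex (Nat.sub_lt h one_pos)
        rw [not_lt] at hmin
        have hfix : Nat.find hex - 1 + 1 = Nat.find hex := by omega
        rwa [hfix] at hmin
    · intro hmem
      rw [Metric.mem_closedBall, dist_zero_right] at hmem
      exact absurd hmem (not_le.mpr (Nat.find_spec hex))
  have term_bound : ∀ k, ∫⁻ x in S k, F x ≤
      ENNReal.ofReal ((4 * Real.sqrt R) ^ n) * ENNReal.ofReal (((2:ℝ)⁻¹) ^ n) ^ k := by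
    intro k
    have hb : (0:ℝ) < R * (4:ℝ)⁻¹ ^ (k+1) := by positivity
    set a : ℝ := R * (4:ℝ)⁻¹ ^ (k+1) with ha
    have hFle : ∀ x ∈ S k, F x ≤ ENNReal.ofReal (((Real.sqrt a)⁻¹) ^ n) := by
      intro x hx
      have h1 : a < ‖x‖ := by
        have h2 := hx.2
        rw [Metric.mem_closedBall, dist_zero_right, not_le] at h2
        exact h2
      have h2 : a ≤ rho x := le_trans h1.le (norm_le_rho x)
      apply ENNReal.ofReal_le_ofReal
      calc rho x ^ (-(n:ℝ) * 2⁻¹) ≤ a ^ (-(n:ℝ) * 2⁻¹) :=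
            Real.rpow_le_rpow_of_nonpos hb h2
              (by rw [neg_mul]; exact neg_nonpos.mpr (by positivity))
        _ = ((Real.sqrt a)⁻¹) ^ n := by
            rw [Real.sqrt_eq_rpow, show (-(n:ℝ) * 2⁻¹) = -(2⁻¹ * n) by ring,
              Real.rpow_neg hb.le, Real.rpow_mul hb.le, Real.rpow_natCast, ← inv_pow, one_div]
    have hms : MeasurableSet (S k) :=
      measurableSet_closedBall.diff measurableSet_closedBall
    calc ∫⁻ x in S k, F x
        ≤ ∫⁻ _x in S k, ENNReal.ofReal (((Real.sqrt a)⁻¹) ^ n) := setLIntegral_mono' hms hFle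
      _ = ENNReal.ofReal (((Real.sqrt a)⁻¹) ^ n) * volume (S k) := setLIntegral_const _ _
      _ ≤ ENNReal.ofReal (((Real.sqrt a)⁻¹) ^ n) * volume (Metric.closedBall (0:Xs n) (R * (4:ℝ)⁻¹ ^ k)) := by
          gcongr
          exact Set.diff_subset
      _ = ENNReal.ofReal (((Real.sqrt a)⁻¹) ^ n) * ENNReal.ofReal (2 * (R * (4:ℝ)⁻¹ ^ k)) ^ n := by
          rw [volume_cball (by positivity)]
      _ = ENNReal.ofReal (((Real.sqrt a)⁻¹) ^ n * (2 * (R * (4:ℝ)⁻¹ ^ k)) ^ n) := by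
          rw [← ENNReal.ofReal_pow (by positivity), ← ENNReal.ofReal_mul (by positivity)]
      _ = ENNReal.ofReal ((4 * Real.sqrt R) ^ n * (((2:ℝ)⁻¹) ^ n) ^ k) := by
          rw [ha, shell_real_eq hR k]
      _ = ENNReal.ofReal ((4 * Real.sqrt R) ^ n) * ENNReal.ofReal (((2:ℝ)⁻¹) ^ n) ^ k := by
          rw [← ENNReal.ofReal_pow (by positivity), ← ENNReal.ofReal_mul (by positivity)]
  calc ∫⁻ x in Metric.closedBall (0:Xs n) R, F x
      ≤ ∫⁻ x in (⋃ k, S k) ∪ {0}, F x := lintegral_mono_set hcover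
    _ ≤ (∫⁻ x in ⋃ k, S k, F x) + ∫⁻ x in ({0} : Set (Xs n)), F x := lintegral_union_le _ _ _
    _ = ∫⁻ x in ⋃ k, S k, F x := by
        rw [setLIntegral_measure_zero _ _ (measure_singleton 0), add_zero]
    _ ≤ ∑' k, ∫⁻ x in S k, F x := lintegral_iUnion_le _ _
    _ ≤ ∑' k, ENNReal.ofReal ((4 * Real.sqrt R) ^ n) * ENNReal.ofReal (((2:ℝ)⁻¹) ^ n) ^ k :=
        ENNReal.tsum_le_tsum term_bound
    _ = ENNReal.ofReal ((4 * Real.sqrt R) ^ n) * ∑' k, ENNReal.ofReal (((2:ℝ)⁻¹) ^ n) ^ k :=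
        ENNReal.tsum_mul_left
    _ = ENNReal.ofReal ((4 * Real.sqrt R) ^ n) * (1 - ENNReal.ofReal (((2:ℝ)⁻¹) ^ n))⁻¹ := by
        rw [ENNReal.tsum_geometric]


lemma volume_Icc_zero (b : ℝ) :
    volume (Set.Icc (0 : Xs n) (fun _ => b)) = ENNReal.ofReal b ^ n := by
  rw [volume_Icc_pi]; simp

lemma lower_lintegral (hn : 0 < n) {ε : ℝ} (hε : 0 < ε) :
    ∫⁻ x in Set.Icc (0 : Xs n) (fun _ => ε), ENNReal.ofReal (rho x ^ (-(n:ℝ))) = ⊤ := by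
  set f : Xs n → ℝ≥0∞ := fun x => ENNReal.ofReal (rho x ^ (-(n:ℝ))) with hf
  set A : ℕ → Set (Xs n) := fun k =>
    Set.Icc 0 (fun _ => ε * (2:ℝ)⁻¹ ^ k) \ Set.Icc 0 (fun _ => ε * (2:ℝ)⁻¹ ^ (k+1)) with hA
  have hIccSub : ∀ {j k : ℕ}, j ≤ k →
      Set.Icc (0 : Xs n) (fun _ => ε * (2:ℝ)⁻¹ ^ k) ⊆ Set.Icc 0 (fun _ => ε * (2:ℝ)⁻¹ ^ j) := by
    intro j k hjk
    apply Set.Icc_subset_Icc le_rfl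
    intro i
    have : (2:ℝ)⁻¹ ^ k ≤ (2:ℝ)⁻¹ ^ j :=
      pow_le_pow_of_le_one (by norm_num) (by norm_num) hjk
    nlinarith
  have hms : ∀ k, MeasurableSet (A k) := fun k => measurableSet_Icc.diff measurableSet_Icc
  have hdisj : Pairwise (Function.onFun Disjoint A) := by
    rw [pairwise_disjoint_on]
    intro j k hjk
    have h1 : A k ⊆ Set.Icc 0 (fun _ => ε * (2:ℝ)⁻¹ ^ (j+1)) :=
      Set.diff_subset.trans (hIccSub hjk)
    exact (Set.disjoint_sdiff_left.mono_right h1)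
  have hδpos : (0:ℝ) < ((Real.sqrt n)⁻¹) ^ n * (1 - ((2:ℝ)⁻¹) ^ n) := by
    have h1 : ((2:ℝ)⁻¹) ^ n < 1 := pow_lt_one₀ (by norm_num) (by norm_num) hn.ne'
    have h2 : (0:ℝ) < Real.sqrt n := Real.sqrt_pos.mpr (by exact_mod_cast hn)
    have h3 : (0:ℝ) < ((Real.sqrt n)⁻¹) ^ n := by positivity
    nlinarith
  set δ : ℝ≥0∞ := ENNReal.ofReal (((Real.sqrt n)⁻¹) ^ n * (1 - ((2:ℝ)⁻¹) ^ n)) with hδ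
  have term_ge : ∀ k, δ ≤ ∫⁻ x in A k, f x := by
    intro k
    set b : ℝ := ε * (2:ℝ)⁻¹ ^ k with hb
    have hbpos : 0 < b := by positivity
    have hspos : (0:ℝ) < ε * (2:ℝ)⁻¹ ^ (k+1) := by positivity
    have hsn : (0:ℝ) < Real.sqrt n := Real.sqrt_pos.mpr (by exact_mod_cast hn)
    have hptwise : ∀ x ∈ A k, ENNReal.ofReal (((Real.sqrt n * b)⁻¹) ^ n) ≤ f x := by
      intro x hx
      obtain ⟨hx1, hx2⟩ := hx
      rw [Set.mem_Icc] at hx1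
      have habs : ∀ i, |x i| ≤ b := by
        intro i
        have h0i : (0:ℝ) ≤ x i := by simpa using hx1.1 i
        have h1i : x i ≤ b := hx1.2 i
        rw [abs_le]
        constructor <;> linarith
      have hrho_le : rho x ≤ Real.sqrt n * b := rho_le_of_abs_le hbpos.le habs
      have hrho_pos : 0 < rho x := by
        rw [Set.mem_Icc, not_and] at hx2
        have h2 := hx2 hx1.1
        rw [Pi.le_def, not_forall] at h2
        obtain ⟨i, hi⟩ := h2
        calc (0:ℝ) < ε * (2:ℝ)⁻¹ ^ (k+1) := hspos
          _ < x i := lt_of_not_ge (by simpa using hi)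
          _ ≤ |x i| := le_abs_self _
          _ ≤ rho x := abs_le_rho x i
      apply ENNReal.ofReal_le_ofReal
      calc ((Real.sqrt n * b)⁻¹) ^ n = (Real.sqrt n * b) ^ (-(n:ℝ)) := by
            rw [Real.rpow_neg (by positivity), Real.rpow_natCast, inv_pow]
        _ ≤ rho x ^ (-(n:ℝ)) :=
            Real.rpow_le_rpow_of_nonpos hrho_pos hrho_le
              (neg_nonpos.mpr (by positivity))
    have hμA : volume (A k) = ENNReal.ofReal (b ^ n) - ENNReal.ofReal ((ε * (2:ℝ)⁻¹ ^ (k+1)) ^ n) := by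
      rw [hA]
      rw [measure_diff (hIccSub (Nat.le_succ k)) measurableSet_Icc.nullMeasurableSet
        (by rw [volume_Icc_zero]; exact (pow_ne_top ofReal_ne_top))]
      rw [volume_Icc_zero, volume_Icc_zero, ← ENNReal.ofReal_pow hspos.le,
        ← ENNReal.ofReal_pow hbpos.le]
    calc δ = ENNReal.ofReal (((Real.sqrt n * b)⁻¹) ^ n * (b ^ n - (ε * (2:ℝ)⁻¹ ^ (k+1)) ^ n)) := by
          rw [hδ]
          congr 1
          have hs : ε * (2:ℝ)⁻¹ ^ (k+1) = b * 2⁻¹ := by rw [hb, pow_succ]; ring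
          rw [hs]
          field_simp
          have hbb : b ^ n * b⁻¹ ^ n = 1 := by rw [← mul_pow, mul_inv_cancel₀ hbpos.ne', one_pow]
          linear_combination (-((Real.sqrt n)⁻¹ ^ n - (Real.sqrt n)⁻¹ ^ n * (1 / 2) ^ n)) * hbb
      _ = ENNReal.ofReal (((Real.sqrt n * b)⁻¹) ^ n) * volume (A k) := by
          rw [hμA, ← ENNReal.ofReal_sub _ (by positivity), ← ENNReal.ofReal_mul (by positivity)]
      _ = ∫⁻ _x in A k, ENNReal.ofReal (((Real.sqrt n * b)⁻¹) ^ n) := (setLIntegral_const _ _).symm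
      _ ≤ ∫⁻ x in A k, f x := setLIntegral_mono' (hms k) hptwise
  have hδ0 : δ ≠ 0 := ne_of_gt (ENNReal.ofReal_pos.mpr hδpos)
  rw [eq_top_iff]
  calc (⊤ : ℝ≥0∞) = ∑' _k : ℕ, δ := (ENNReal.tsum_const_eq_top_of_ne_zero hδ0).symm
    _ ≤ ∑' k, ∫⁻ x in A k, f x := ENNReal.tsum_le_tsum term_ge
    _ = ∫⁻ x in ⋃ k, A k, f x := (lintegral_iUnion hms hdisj f).symm
    _ ≤ ∫⁻ x in Set.Icc (0 : Xs n) (fun _ => ε), f x := by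
        apply lintegral_mono_set
        apply Set.iUnion_subset
        intro k
        refine Set.diff_subset.trans ?_
        simpa using hIccSub (Nat.zero_le k)


lemma rpow_half_eq {a : ℝ} (ha : 0 < a) (n : ℕ) :
    a ^ (-(n:ℝ) * 2⁻¹) = ((Real.sqrt a)⁻¹) ^ n := by
  rw [Real.sqrt_eq_rpow, show (-(n:ℝ) * 2⁻¹) = -(2⁻¹ * n) by ring,
    Real.rpow_neg ha.le, Real.rpow_mul ha.le, Real.rpow_natCast, ← inv_pow, one_div]

lemma restrict_cube_ne_zero (hn : 0 < n) (c : Xs n) {l : ℝ} (hl : 0 < l) :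
    volume.restrict (Cube c l) ≠ 0 := by
  rw [Ne, Measure.restrict_eq_zero, volume_cube]
  exact pow_ne_zero _ (by simp [ENNReal.ofReal_eq_zero]; linarith)

lemma cube_bound (hn : 0 < n) (c : Xs n) {l : ℝ} (hl : 0 < l) :
    (avg volume (Cube c l) (fun x => ENNReal.ofReal (rho x ^ (-(n:ℝ) * 2⁻¹)))) ^ (2:ℕ) *
      essSup (fun x => (ENNReal.ofReal (rho x ^ (-(n:ℝ))))⁻¹) (volume.restrict (Cube c l)) ≤
    ENNReal.ofReal ((16 * (1 + Real.sqrt n) ^ 2) ^ n) *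
        ((1 - ENNReal.ofReal (((2:ℝ)⁻¹) ^ n))⁻¹) ^ (2:ℕ)
      + ENNReal.ofReal ((1 + Real.sqrt n) ^ n) := by
  haveI : Nonempty (Fin n) := Fin.pos_iff_nonempty.mp hn
  set Q := Cube c l with hQdef
  have hQmeas : MeasurableSet Q := measurableSet_Icc
  have hμQ : volume Q = ENNReal.ofReal l ^ n := volume_cube c l
  have hμQ0 : volume Q ≠ 0 := by
    rw [hμQ]; exact pow_ne_zero _ (by simp [ENNReal.ofReal_eq_zero]; linarith)
  have hμQtop : volume Q ≠ ⊤ := by rw [hμQ]; exact (pow_ne_top ofReal_ne_top)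
  have hQne : Q.Nonempty := by
    refine ⟨c, le_rfl, ?_⟩
    intro i; simp; linarith
  have hrho_cont : Continuous (rho : Xs n → ℝ) := by
    apply Real.continuous_sqrt.comp
    exact continuous_finset_sum _ fun i _ => (continuous_apply i).pow 2
  obtain ⟨x₀, hx₀Q, hmin⟩ := isCompact_Icc.exists_isMinOn hQne hrho_cont.continuousOn
  have hmin' : ∀ x ∈ Q, rho x₀ ≤ rho x := isMinOn_iff.mp hmin
  set m := rho x₀ with hmdef
  have hm0 : 0 ≤ m := rho_nonneg x₀
  have hsn : (0:ℝ) ≤ Real.sqrt n := Real.sqrt_nonneg _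
  have hdiam : ∀ x ∈ Q, rho x ≤ m + Real.sqrt n * l := by
    intro x hx
    have h1 : rho (x - x₀) ≤ Real.sqrt n * l := by
      apply rho_le_of_abs_le hl.le
      intro i
      have hxi1 : c i ≤ x i := hx.1 i
      have hxi2 : x i ≤ c i + l := hx.2 i
      have hyi1 : c i ≤ x₀ i := hx₀Q.1 i
      have hyi2 : x₀ i ≤ c i + l := hx₀Q.2 i
      rw [abs_le, Pi.sub_apply]
      constructor <;> linarith
    have h2 := rho_triangle x x₀
    linarith
  -- essSup bound
  have h0ae : ∀ᵐ x ∂(volume : Measure (Xs n)), x ≠ 0 := by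
    rw [ae_iff]
    have : {a : Xs n | ¬ a ≠ 0} = {0} := by ext a; simp
    rw [this]
    exact measure_singleton 0
  have hess : essSup (fun x => (ENNReal.ofReal (rho x ^ (-(n:ℝ))))⁻¹) (volume.restrict Q)
      ≤ ENNReal.ofReal ((m + Real.sqrt n * l) ^ n) := by
    refine essSup_le_of_ae_le _ ?_
    filter_upwards [ae_restrict_mem hQmeas, ae_restrict_of_ae h0ae] with x hxQ hx0
    have hrpos : 0 < rho x := by
      have hex : ∃ i, x i ≠ 0 := by
        by_contra hcon; push_neg at hcon; exact hx0 (funext hcon)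
      obtain ⟨i, hi⟩ := hex
      calc (0:ℝ) < |x i| := abs_pos.mpr hi
        _ ≤ rho x := abs_le_rho x i
    rw [ofReal_rho_inv_eq hrpos]
    exact ENNReal.ofReal_le_ofReal (pow_le_pow_left₀ (rho_nonneg x) (hdiam x hxQ) n)
  rw [avg]
  by_cases hcase : m ≤ l
  · -- near case
    set R := (1 + Real.sqrt n) * l with hRdef
    have hR : 0 < R := by positivity
    have hsub : Q ⊆ Metric.closedBall 0 R := by
      intro x hx
      rw [Metric.mem_closedBall, dist_zero_right]
      calc ‖x‖ ≤ rho x := norm_le_rho x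
        _ ≤ m + Real.sqrt n * l := hdiam x hx
        _ ≤ R := by rw [hRdef]; nlinarith
    have hint : ∫⁻ x in Q, ENNReal.ofReal (rho x ^ (-(n:ℝ) * 2⁻¹)) ≤
        ENNReal.ofReal ((4 * Real.sqrt R) ^ n) * (1 - ENNReal.ofReal (((2:ℝ)⁻¹) ^ n))⁻¹ :=
      (lintegral_mono_set hsub).trans (tail_bound hn hR)
    have hinv : (volume Q)⁻¹ = ENNReal.ofReal ((l ^ n)⁻¹) := by
      rw [hμQ, ← ENNReal.ofReal_pow hl.le, ← ENNReal.ofReal_inv_of_pos (by positivity)]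
    set D : ℝ≥0∞ := (1 - ENNReal.ofReal (((2:ℝ)⁻¹) ^ n))⁻¹ with hDdef
    set u : ℝ := (l ^ n)⁻¹ * (4 * Real.sqrt R) ^ n with hu
    have havg : (volume Q)⁻¹ * ∫⁻ x in Q, ENNReal.ofReal (rho x ^ (-(n:ℝ) * 2⁻¹)) ≤
        ENNReal.ofReal u * D := by
      rw [hinv, hu, ENNReal.ofReal_mul (by positivity), mul_assoc]
      exact mul_le_mul_right hint _
    calc ((volume Q)⁻¹ * ∫⁻ x in Q, ENNReal.ofReal (rho x ^ (-(n:ℝ) * 2⁻¹))) ^ (2:ℕ) *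
          essSup (fun x => (ENNReal.ofReal (rho x ^ (-(n:ℝ))))⁻¹) (volume.restrict Q)
        ≤ (ENNReal.ofReal u * D) ^ (2:ℕ) * ENNReal.ofReal ((m + Real.sqrt n * l) ^ n) := by
          gcongr
      _ = ENNReal.ofReal (u ^ 2) * ENNReal.ofReal ((m + Real.sqrt n * l) ^ n) * D ^ (2:ℕ) := by
          rw [mul_pow, ← ENNReal.ofReal_pow (by positivity : (0:ℝ) ≤ u), mul_right_comm]
      _ = ENNReal.ofReal (u ^ 2 * (m + Real.sqrt n * l) ^ n) * D ^ (2:ℕ) := by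
          rw [ENNReal.ofReal_mul (by positivity)]
      _ ≤ ENNReal.ofReal ((16 * (1 + Real.sqrt n) ^ 2) ^ n) * D ^ (2:ℕ) := by
          gcongr
          have hsq : Real.sqrt R ^ 2 = R := Real.sq_sqrt hR.le
          have h1 : u ^ 2 = ((4 * Real.sqrt R / l) ^ 2) ^ n := by
            rw [pow_right_comm, div_pow, div_eq_mul_inv,
              mul_comm ((4 * Real.sqrt R) ^ n) ((l ^ n)⁻¹), ← hu]
          have h2 : (m + Real.sqrt n * l) ^ n ≤ R ^ n := by
            apply pow_le_pow_left₀ (by positivity)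
            rw [hRdef]; nlinarith
          calc u ^ 2 * (m + Real.sqrt n * l) ^ n ≤ ((4 * Real.sqrt R / l) ^ 2) ^ n * R ^ n := by
                rw [h1]; gcongr
            _ = ((4 * Real.sqrt R / l) ^ 2 * R) ^ n := (mul_pow _ _ n).symm
            _ = (16 * (1 + Real.sqrt n) ^ 2) ^ n := by
                congr 1
                rw [div_pow, mul_pow]
                rw [hsq, hRdef]
                field_simp
                ring
      _ ≤ _ := le_self_add
  · -- far case
    push_neg at hcase
    have hm : 0 < m := lt_trans hl hcase
    have hptw : ∀ x ∈ Q, ENNReal.ofReal (rho x ^ (-(n:ℝ) * 2⁻¹)) ≤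
        ENNReal.ofReal (((Real.sqrt m)⁻¹) ^ n) := by
      intro x hx
      apply ENNReal.ofReal_le_ofReal
      rw [← rpow_half_eq hm n]
      exact Real.rpow_le_rpow_of_nonpos hm (hmin' x hx)
        (by rw [neg_mul]; exact neg_nonpos.mpr (by positivity))
    have hint : ∫⁻ x in Q, ENNReal.ofReal (rho x ^ (-(n:ℝ) * 2⁻¹)) ≤
        ENNReal.ofReal (((Real.sqrt m)⁻¹) ^ n) * volume Q := by
      calc ∫⁻ x in Q, ENNReal.ofReal (rho x ^ (-(n:ℝ) * 2⁻¹))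
          ≤ ∫⁻ _x in Q, ENNReal.ofReal (((Real.sqrt m)⁻¹) ^ n) := setLIntegral_mono' hQmeas hptw
        _ = ENNReal.ofReal (((Real.sqrt m)⁻¹) ^ n) * volume Q := setLIntegral_const _ _
    have havg : (volume Q)⁻¹ * ∫⁻ x in Q, ENNReal.ofReal (rho x ^ (-(n:ℝ) * 2⁻¹)) ≤
        ENNReal.ofReal (((Real.sqrt m)⁻¹) ^ n) := by
      calc (volume Q)⁻¹ * ∫⁻ x in Q, ENNReal.ofReal (rho x ^ (-(n:ℝ) * 2⁻¹))
          ≤ (volume Q)⁻¹ * (ENNReal.ofReal (((Real.sqrt m)⁻¹) ^ n) * volume Q) :=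
            mul_le_mul_right hint _
        _ = ENNReal.ofReal (((Real.sqrt m)⁻¹) ^ n) * ((volume Q)⁻¹ * volume Q) := by ring
        _ = ENNReal.ofReal (((Real.sqrt m)⁻¹) ^ n) := by
            rw [ENNReal.inv_mul_cancel hμQ0 hμQtop, mul_one]
    calc ((volume Q)⁻¹ * ∫⁻ x in Q, ENNReal.ofReal (rho x ^ (-(n:ℝ) * 2⁻¹))) ^ (2:ℕ) *
          essSup (fun x => (ENNReal.ofReal (rho x ^ (-(n:ℝ))))⁻¹) (volume.restrict Q)
        ≤ (ENNReal.ofReal (((Real.sqrt m)⁻¹) ^ n)) ^ (2:ℕ) *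
            ENNReal.ofReal ((m + Real.sqrt n * l) ^ n) := by gcongr
      _ = ENNReal.ofReal ((((Real.sqrt m)⁻¹) ^ n) ^ 2 * (m + Real.sqrt n * l) ^ n) := by
          rw [← ENNReal.ofReal_pow (by positivity), ← ENNReal.ofReal_mul (by positivity)]
      _ ≤ ENNReal.ofReal ((1 + Real.sqrt n) ^ n) := by
          apply ENNReal.ofReal_le_ofReal
          have hsqm : Real.sqrt m ^ 2 = m := Real.sq_sqrt hm.le
          have h1 : (((Real.sqrt m)⁻¹) ^ n) ^ 2 * (m + Real.sqrt n * l) ^ n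
              = (m⁻¹ * (m + Real.sqrt n * l)) ^ n := by
            rw [← pow_right_comm, ← mul_pow, inv_pow, hsqm]
          rw [h1]
          apply pow_le_pow_left₀ (by positivity)
          rw [inv_mul_le_iff₀ hm]
          nlinarith
      _ ≤ _ := le_add_self

end Statement1Aux

open Statement1Aux

/-- The pair `(|x|^{-n}, 1)` belongs to the bilinear class
`A_{(1,1)}`, even though `|x|^{-n}` is not locally integrable (hence not in `A₁`). -/
theorem statement1 {n : ℕ} (hn : 0 < n) (w₁ w₂ : Xs n → ℝ≥0∞)
    (hw₁ : w₁ = fun x => ENNReal.ofReal ((Real.sqrt (∑ i, x i ^ 2)) ^ (-(n : ℝ))))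
    (hw₂ : w₂ = fun _ => 1) :
    ((⨆ (c : Xs n) (l : ℝ) (_ : 0 < l),
      (avg volume (Cube c l) (fun x => (w₁ x * w₂ x) ^ (2⁻¹ : ℝ))) ^ (2 : ℕ) *
        essSup (fun x => (w₁ x)⁻¹) (volume.restrict (Cube c l)) *
        essSup (fun x => (w₂ x)⁻¹) (volume.restrict (Cube c l))) < ⊤) ∧
    ¬ MeasureTheory.LocallyIntegrable
        (fun x : Xs n => (Real.sqrt (∑ i, x i ^ 2)) ^ (-(n : ℝ))) volume ∧
    AConst volume w₁ 1 = ⊤ := by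
  haveI : Nonempty (Fin n) := Fin.pos_iff_nonempty.mp hn
  refine ⟨?_, ?_, ?_⟩
  · -- Part 1: the bilinear A_{(1,1)} constant is finite
    set K : ℝ≥0∞ := ENNReal.ofReal ((16 * (1 + Real.sqrt n) ^ 2) ^ n) *
          ((1 - ENNReal.ofReal (((2:ℝ)⁻¹) ^ n))⁻¹) ^ (2:ℕ)
        + ENNReal.ofReal ((1 + Real.sqrt n) ^ n) with hK
    have hKtop : K < ⊤ := by
      have hr : ENNReal.ofReal (((2:ℝ)⁻¹) ^ n) < 1 := by
        rw [ENNReal.ofReal_lt_one]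
        exact pow_lt_one₀ (by norm_num) (by norm_num) hn.ne'
      have hD : (1 - ENNReal.ofReal (((2:ℝ)⁻¹) ^ n))⁻¹ < ⊤ :=
        ENNReal.inv_lt_top.2 (tsub_pos_of_lt hr)
      exact ENNReal.add_lt_top.2
        ⟨ENNReal.mul_lt_top ENNReal.ofReal_lt_top (ENNReal.pow_lt_top hD),
         ENNReal.ofReal_lt_top⟩
    refine lt_of_le_of_lt (iSup_le fun c => iSup_le fun l => iSup_le fun hl => ?_) hKtop
    simp only [hw₁, hw₂, mul_one, inv_one]
    have hfun : (fun x : Xs n =>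
        ENNReal.ofReal (Real.sqrt (∑ i, x i ^ 2) ^ (-(n:ℝ))) ^ (2⁻¹ : ℝ)) =
        fun x => ENNReal.ofReal (rho x ^ (-(n:ℝ) * 2⁻¹)) := by
      funext x
      rw [rho_def, ENNReal.ofReal_rpow_of_nonneg (Real.rpow_nonneg (rho_nonneg x) _)
        (by norm_num), ← Real.rpow_mul (rho_nonneg x)]
    rw [hfun, essSup_const _ (restrict_cube_ne_zero hn c hl), mul_one]
    simp only [rho_def]
    exact cube_bound hn c hl
  · -- Part 2: |x|^{-n} is not locally integrable
    intro hLI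
    obtain ⟨s, hs, hint⟩ := hLI 0
    rw [Metric.mem_nhds_iff] at hs
    obtain ⟨ε, hε, hball⟩ := hs
    have hsub : Set.Icc (0 : Xs n) (fun _ => ε/2) ⊆ s := by
      intro x hx
      apply hball
      rw [Metric.mem_ball, dist_zero_right]
      have hle : ‖x‖ ≤ ε/2 := by
        rw [pi_norm_le_iff_of_nonneg (by linarith)]
        intro i
        have h1 : (0:ℝ) ≤ x i := by simpa using hx.1 i
        have h2 : x i ≤ ε/2 := by simpa using hx.2 i
        rw [Real.norm_eq_abs, abs_le]
        constructor <;> linarith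
      linarith
    have hIT := hint.mono_set hsub
    have hfin := hIT.2
    rw [hasFiniteIntegral_iff_norm] at hfin
    have heq : ∫⁻ x in Set.Icc (0 : Xs n) (fun _ => ε/2),
        ENNReal.ofReal ‖(Real.sqrt (∑ i, x i ^ 2)) ^ (-(n:ℝ))‖ = ⊤ := by
      have hpt : ∀ x : Xs n, ENNReal.ofReal ‖(Real.sqrt (∑ i, x i ^ 2)) ^ (-(n:ℝ))‖ =
          ENNReal.ofReal (rho x ^ (-(n:ℝ))) := by
        intro x
        rw [Real.norm_eq_abs, abs_of_nonneg (Real.rpow_nonneg (Real.sqrt_nonneg _) _), rho_def]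
      simp only [hpt]
      exact lower_lintegral hn (by linarith)
    rw [heq] at hfin
    exact lt_irrefl _ hfin
  · -- Part 3: the A₁ constant of w₁ is infinite
    rw [eq_top_iff, AConst]
    refine le_iSup_of_le (0 : Xs n) (le_iSup_of_le (1:ℝ) (le_iSup_of_le one_pos ?_))
    rw [if_pos rfl]
    have hQ : Cube (0 : Xs n) 1 = Set.Icc 0 (fun _ => (1:ℝ)) := by
      rw [Cube]; congr 1; funext i; simp
    have havg : avg volume (Cube (0:Xs n) 1) w₁ = ⊤ := by
      rw [avg, hQ, volume_Icc_zero]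
      simp only [ENNReal.ofReal_one, one_pow, inv_one, one_mul]
      simp only [hw₁, rho_def]
      exact lower_lintegral hn one_pos
    set S : Set (Xs n) := Set.Icc (fun _ => (2⁻¹:ℝ)) (fun _ => (1:ℝ)) with hSdef
    have hS : S ⊆ Cube (0:Xs n) 1 := by
      rw [hQ]
      apply Set.Icc_subset_Icc <;> intro i <;> norm_num
    have hSne : volume.restrict S ≠ 0 := by
      rw [Ne, Measure.restrict_eq_zero, hSdef, volume_Icc_pi]
      simp only [Finset.prod_const, Finset.card_univ, Fintype.card_fin]
      apply pow_ne_zero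
      rw [Ne, ENNReal.ofReal_eq_zero]
      norm_num
    have hessS : ENNReal.ofReal ((2⁻¹:ℝ) ^ n) ≤
        essSup (fun x => (w₁ x)⁻¹) (volume.restrict (Cube (0:Xs n) 1)) := by
      refine le_trans ?_ (essSup_mono_measure
        (Measure.absolutelyContinuous_of_le (Measure.restrict_mono hS le_rfl)))
      have h1 : essSup (fun _ : Xs n => ENNReal.ofReal ((2⁻¹:ℝ) ^ n)) (volume.restrict S) =
          ENNReal.ofReal ((2⁻¹:ℝ) ^ n) := essSup_const _ hSne
      rw [← h1]
      refine essSup_mono_ae ?_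
      filter_upwards [ae_restrict_mem measurableSet_Icc] with x hx
      have hx0 : (2⁻¹:ℝ) ≤ x ⟨0, hn⟩ := by simpa using hx.1 ⟨0, hn⟩
      have hrpos : 0 < rho x :=
        lt_of_lt_of_le (by norm_num : (0:ℝ) < 2⁻¹)
          (hx0.trans ((le_abs_self _).trans (abs_le_rho x ⟨0, hn⟩)))
      simp only [hw₁, rho_def]
      rw [ofReal_rho_inv_eq hrpos]
      apply ENNReal.ofReal_le_ofReal
      apply pow_le_pow_left₀ (by norm_num)
      exact hx0.trans ((le_abs_self _).trans (abs_le_rho x ⟨0, hn⟩))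
    have hE0 : essSup (fun x => (w₁ x)⁻¹) (volume.restrict (Cube (0:Xs n) 1)) ≠ 0 :=
      ne_of_gt (lt_of_lt_of_le (ENNReal.ofReal_pos.mpr (by positivity)) hessS)
    rw [havg, ENNReal.top_mul hE0]
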